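/- The kissing number in dimension 2 is 6: for every finite set S of points in the Euclidean plane ℝ² such that every point of S has norm 2 and any two distinct points of S are at distance at least 2 from each other, the cardinality of S is at most 6; moreover, there exists such a set S with exactly 6 points. -/

import Mathlib

open Real

noncomputable def ang (x : EuclideanSpace ℝ (Fin 2)) : ℝ := Complex.arg (Complex.mk (x 0) (x 1))

lemma ang_mem (x : EuclideanSpace ℝ (Fin 2)) : ang x ∈ Set.Ioc (-π) π :=
  ⟨Complex.neg_pi_lt_arg _, Complex.arg_le_pi _⟩

lemma coords {x : EuclideanSpace ℝ (Fin 2)} (hx : ‖x‖ = 2) :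
    x 0 = 2 * Real.cos (ang x) ∧ x 1 = 2 * Real.sin (ang x) := by
  set z : ℂ := Complex.mk (x 0) (x 1) with hz
  have habs : ‖z‖ = 2 := by
    rw [Complex.norm_def, Complex.normSq_apply]
    rw [EuclideanSpace.norm_eq, Fin.sum_univ_two] at hx
    simpa [Real.norm_eq_abs, sq_abs, sq] using hx
  have hz0 : z ≠ 0 := by
    intro h; rw [h] at habs; simp at habs
  constructor
  · have := Complex.cos_arg hz0
    rw [habs] at this
    have : Real.cos (ang x) = x 0 / 2 := this
    linarith [this]
  · have := Complex.sin_arg z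
    rw [habs] at this
    have : Real.sin (ang x) = x 1 / 2 := this
    linarith [this]

lemma dist_eq_of_norm {x y : EuclideanSpace ℝ (Fin 2)} (hx : ‖x‖ = 2) (hy : ‖y‖ = 2) :
    dist x y = Real.sqrt (8 - 8 * Real.cos (ang x - ang y)) := by
  obtain ⟨hx0, hx1⟩ := coords hx
  obtain ⟨hy0, hy1⟩ := coords hy
  rw [EuclideanSpace.dist_eq, Fin.sum_univ_two, Real.dist_eq, Real.dist_eq, sq_abs, sq_abs,
    hx0, hx1, hy0, hy1]
  congr 1
  rw [Real.cos_sub]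
  nlinarith [Real.sin_sq_add_cos_sq (ang x), Real.sin_sq_add_cos_sq (ang y)]

lemma cos_gt_half {t : ℝ} (h : |t| < π / 3) : 1 / 2 < Real.cos t := by
  have h1 : Real.cos (π / 3) < Real.cos |t| := by
    apply Real.cos_lt_cos_of_nonneg_of_le_pi (abs_nonneg t) _ h
    linarith [Real.pi_pos]
  rw [Real.cos_pi_div_three, Real.cos_abs] at h1
  exact h1

lemma caseA {a b : ℝ} (hfl : ⌊(a + π) * 3 / π⌋ = ⌊(b + π) * 3 / π⌋) :
    1 / 2 < Real.cos (a - b) := by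
  have hpi := Real.pi_pos
  set u := (a + π) * 3 / π with hu
  set v := (b + π) * 3 / π with hv
  have h1 : u - v < 1 := by
    have t1 := Int.lt_floor_add_one u
    have t2 := Int.floor_le v
    rw [hfl] at t1
    linarith
  have h2 : v - u < 1 := by
    have t1 := Int.lt_floor_add_one v
    have t2 := Int.floor_le u
    rw [hfl] at t2
    linarith
  have huv : u - v = (a - b) * 3 / π := by rw [hu, hv]; field_simp; ring
  have hvu : v - u = (b - a) * 3 / π := by rw [hu, hv]; field_simp; ring
  rw [huv, div_lt_one hpi] at h1
  rw [hvu, div_lt_one hpi] at h2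
  have hab : |a - b| < π / 3 := by
    rw [abs_lt]; constructor <;> linarith
  exact cos_gt_half hab

lemma caseB {a b : ℝ} (ha : a ∈ Set.Ioc (-π) π) (hb : b ∈ Set.Ioc (-π) π)
    (hu6 : ⌊(a + π) * 3 / π⌋ = 6) (hv0 : ⌊(b + π) * 3 / π⌋ = 0) :
    1 / 2 < Real.cos (a - b) := by
  have hpi := Real.pi_pos
  have hu_le : (a + π) * 3 / π ≤ 6 := by
    rw [div_le_iff₀ hpi]; nlinarith [ha.2]
  have hu_ge : (6 : ℝ) ≤ (a + π) * 3 / π := by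
    have := Int.floor_le ((a + π) * 3 / π)
    rw [hu6] at this; exact_mod_cast this
  have ha_eq : a = π := by
    have : (a + π) * 3 / π = 6 := le_antisymm hu_le hu_ge
    rw [div_eq_iff (ne_of_gt hpi)] at this
    linarith
  have hv_lt : (b + π) * 3 / π < 1 := by
    have := Int.lt_floor_add_one ((b + π) * 3 / π)
    rw [hv0] at this; push_cast at this; linarith
  rw [div_lt_one hpi] at hv_lt
  have hb1 : b < -2 * π / 3 := by linarith
  have : Real.cos (a - b) = Real.cos (a - b - 2 * π) := (Real.cos_sub_two_pi _).symm
  rw [this]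
  apply cos_gt_half
  rw [ha_eq, abs_lt]
  constructor <;> [linarith; linarith [hb.1]]

lemma floor_bounds {a : ℝ} (ha : a ∈ Set.Ioc (-π) π) :
    0 ≤ ⌊(a + π) * 3 / π⌋ ∧ ⌊(a + π) * 3 / π⌋ ≤ 6 := by
  have hpi := Real.pi_pos
  constructor
  · apply Int.floor_nonneg.mpr
    have : 0 < a + π := by linarith [ha.1]
    positivity
  · have h : (a + π) * 3 / π ≤ 6 := by
      rw [div_le_iff₀ hpi]; nlinarith [ha.2]
    have hh : (⌊(a + π) * 3 / π⌋ : ℝ) ≤ 6 := (Int.floor_le _).trans h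
    exact_mod_cast hh

noncomputable def idx (x : EuclideanSpace ℝ (Fin 2)) : ZMod 6 :=
  ((⌊(ang x + π) * 3 / π⌋ : ℤ) : ZMod 6)

lemma cos_gt_of_idx_eq {x y : EuclideanSpace ℝ (Fin 2)} (h : idx x = idx y) :
    1 / 2 < Real.cos (ang x - ang y) := by
  have hax := ang_mem x
  have hay := ang_mem y
  obtain ⟨hx0, hx6⟩ := floor_bounds hax
  obtain ⟨hy0, hy6⟩ := floor_bounds hay
  set m := ⌊(ang x + π) * 3 / π⌋ with hm
  set n := ⌊(ang y + π) * 3 / π⌋ with hn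
  have hdvd : (6 : ℤ) ∣ m - n := by
    have : ((m - n : ℤ) : ZMod 6) = 0 := by
      push_cast
      rw [show ((m : ZMod 6) : ZMod 6) - (n : ZMod 6) = idx x - idx y from rfl, h]
      ring
    exact (ZMod.intCast_zmod_eq_zero_iff_dvd _ 6).mp this
  obtain ⟨k, hk⟩ := hdvd
  have hk' : k = -1 ∨ k = 0 ∨ k = 1 := by omega
  rcases hk' with hk1 | hk1 | hk1
  · -- m - n = -6: m = 0, n = 6
    have hm0 : m = 0 := by omega
    have hn6 : n = 6 := by omega
    have := caseB hay hax hn6 hm0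
    rwa [show ang y - ang x = -(ang x - ang y) by ring, Real.cos_neg] at this
  · have : m = n := by omega
    exact caseA this
  · have hm6 : m = 6 := by omega
    have hn0 : n = 0 := by omega
    exact caseB hax hay hm6 hn0

noncomputable def pt (a b : ℝ) : EuclideanSpace ℝ (Fin 2) :=
  (WithLp.equiv 2 (Fin 2 → ℝ)).symm ![a, b]

lemma pt_norm {a b : ℝ} (h : a ^ 2 + b ^ 2 = 4) : ‖pt a b‖ = 2 := by
  rw [EuclideanSpace.norm_eq, Fin.sum_univ_two]
  simp only [pt, WithLp.equiv_symm_apply, WithLp.ofLp_toLp, PiLp.toLp_apply, Matrix.cons_val_zero, Matrix.cons_val_one,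
    Matrix.head_cons, Real.norm_eq_abs, sq_abs]
  rw [h]
  rw [show (4:ℝ) = 2^2 by norm_num, Real.sqrt_sq (by norm_num)]

lemma pt_dist {a b c d : ℝ} (h : 4 ≤ (a - c) ^ 2 + (b - d) ^ 2) :
    2 ≤ dist (pt a b) (pt c d) := by
  rw [EuclideanSpace.dist_eq, Fin.sum_univ_two]
  simp only [pt, WithLp.equiv_symm_apply, WithLp.ofLp_toLp, PiLp.toLp_apply, Matrix.cons_val_zero, Matrix.cons_val_one,
    Matrix.head_cons, Real.dist_eq, sq_abs]
  rw [show (2:ℝ) = Real.sqrt 4 by rw [show (4:ℝ) = 2^2 by norm_num, Real.sqrt_sq]; norm_num]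
  exact Real.sqrt_le_sqrt h

noncomputable def hex : Fin 6 → EuclideanSpace ℝ (Fin 2) :=
  ![pt 2 0, pt 1 (Real.sqrt 3), pt (-1) (Real.sqrt 3), pt (-2) 0,
    pt (-1) (-Real.sqrt 3), pt 1 (-Real.sqrt 3)]

lemma sqrt3_sq : Real.sqrt 3 ^ 2 = 3 := Real.sq_sqrt (by norm_num)

lemma hex_norm (k : Fin 6) : ‖hex k‖ = 2 := by
  fin_cases k <;> simp only [hex, Matrix.cons_val_zero, Matrix.cons_val_one, Matrix.head_cons] <;>
    apply pt_norm <;> nlinarith [sqrt3_sq]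

lemma hex_dist (k l : Fin 6) (h : k ≠ l) : 2 ≤ dist (hex k) (hex l) := by
  have s3 := sqrt3_sq
  fin_cases k <;> fin_cases l <;> first
    | exact absurd rfl h
    | (simp only [hex, Matrix.cons_val_zero, Matrix.cons_val_one, Matrix.head_cons,
        Matrix.cons_val_two, Matrix.tail_cons, Matrix.cons_val_three, Matrix.cons_val_four,
        Matrix.cons_val_fin_one]
       apply pt_dist
       nlinarith [s3, Real.sqrt_nonneg 3])

theorem kissingNumber_dim2 :
    (∀ S : Finset (EuclideanSpace ℝ (Fin 2)),
        (∀ x ∈ S, ‖x‖ = 2) →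
        (∀ x ∈ S, ∀ y ∈ S, x ≠ y → 2 ≤ dist x y) →
        S.card ≤ 6) ∧
      ∃ S : Finset (EuclideanSpace ℝ (Fin 2)),
        (∀ x ∈ S, ‖x‖ = 2) ∧
        (∀ x ∈ S, ∀ y ∈ S, x ≠ y → 2 ≤ dist x y) ∧
        S.card = 6 := by
  constructor
  · intro S hnorm hdist
    have hinj : Set.InjOn idx ↑S := by
      intro x hx y hy hxy
      by_contra hne
      have h2 := hdist x hx y hy hne
      have hcos := cos_gt_of_idx_eq hxy
      have hd : dist x y = Real.sqrt (8 - 8 * Real.cos (ang x - ang y)) :=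
        dist_eq_of_norm (hnorm x hx) (hnorm y hy)
      have : dist x y < 2 := by
        rw [hd, show (2:ℝ) = Real.sqrt 4 by
          rw [show (4:ℝ) = 2^2 by norm_num, Real.sqrt_sq]; norm_num]
        apply Real.sqrt_lt_sqrt (by nlinarith [Real.cos_le_one (ang x - ang y)])
        linarith
      linarith
    calc S.card ≤ (Finset.univ : Finset (ZMod 6)).card :=
          Finset.card_le_card_of_injOn idx (fun _ _ => Finset.mem_univ _) hinj
      _ = 6 := by simp
  · classical
    refine ⟨Finset.image hex Finset.univ, ?_, ?_, ?_⟩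
    · intro x hx
      obtain ⟨k, _, rfl⟩ := Finset.mem_image.mp hx
      exact hex_norm k
    · intro x hx y hy hxy
      obtain ⟨k, _, rfl⟩ := Finset.mem_image.mp hx
      obtain ⟨l, _, rfl⟩ := Finset.mem_image.mp hy
      exact hex_dist k l (fun h => hxy (by rw [h]))
    · rw [Finset.card_image_of_injective _ ?_, Finset.card_univ, Fintype.card_fin]
      intro k l hkl
      by_contra hne
      have := hex_dist k l hne
      rw [hkl, dist_self] at this
      linarith
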